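/- Let q be an odd prime power and let ν be a generator of 𝔽_q*. The conjugacy class in SL₂(𝔽_q) of the matrix [[−1,0],[−1,−1]] has exactly (q²−1)/2 elements, and similarly for [[−1,0],[−ν,−1]]. -/

import Mathlib

set_option linter.unusedSectionVars false

/-- The matrix `[[-1,0],[c,-1]]` as an element of `SL₂(F)`. -/
def T {F : Type} [Field F] (c : F) : Matrix.SpecialLinearGroup (Fin 2) F :=
  ⟨!![-1, 0; c, -1], by norm_num [Matrix.det_fin_two_of]⟩

section Aux

open Matrix

variable {F : Type} [Field F] [Fintype F] [DecidableEq F]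

def Dg (u : Fˣ) : GL (Fin 2) F :=
  ⟨!![(u:F),0;0,1], !![((u⁻¹:Fˣ):F),0;0,1],
    by rw [Matrix.mul_fin_two, Matrix.one_fin_two]; simp,
    by rw [Matrix.mul_fin_two, Matrix.one_fin_two]; simp⟩

noncomputable def glEquiv : (Matrix.SpecialLinearGroup (Fin 2) F) × Fˣ ≃ GL (Fin 2) F where
  toFun p := p.1.toGL * Dg p.2
  invFun A := (⟨(A : Matrix (Fin 2) (Fin 2) F) * !![(((GeneralLinearGroup.det A)⁻¹ : Fˣ):F),0;0,1],
      by
        rw [Matrix.det_mul]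
        have h : ((GeneralLinearGroup.det A : Fˣ) : F) = (A : Matrix (Fin 2) (Fin 2) F).det := rfl
        rw [← h, Matrix.det_fin_two_of]
        simp
        exact mul_inv_cancel₀ ((GeneralLinearGroup.det A).ne_zero)⟩,
      GeneralLinearGroup.det A)
  left_inv p := by
    obtain ⟨S, u⟩ := p
    have hdet : GeneralLinearGroup.det (S.toGL * Dg u) = u := by
      rw [_root_.map_mul]
      have h1 : GeneralLinearGroup.det S.toGL = 1 := S.coeToGL_det
      have h2 : GeneralLinearGroup.det (Dg u : GL (Fin 2) F) = u := by
        ext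
        show (!![(u:F),0;0,1]).det = (u : F)
        simp [Matrix.det_fin_two_of]
      rw [h1, h2, one_mul]
    refine Prod.ext ?_ hdet
    apply Subtype.ext
    show ((S.toGL * Dg u : GL (Fin 2) F) : Matrix (Fin 2) (Fin 2) F) * _ = (S : Matrix (Fin 2) (Fin 2) F)
    rw [hdet]
    show (S : Matrix (Fin 2) (Fin 2) F) * !![(u:F),0;0,1] * _ = _
    rw [Matrix.mul_assoc, Matrix.mul_fin_two]
    simp [← Matrix.one_fin_two]
  right_inv A := by
    have hd : ((A : Matrix (Fin 2) (Fin 2) F)).det ≠ 0 := (GeneralLinearGroup.det A).ne_zero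
    ext1
    show ((A : Matrix (Fin 2) (Fin 2) F) * !![(((GeneralLinearGroup.det A)⁻¹ : Fˣ):F),0;0,1]) * !![(((GeneralLinearGroup.det A) : Fˣ):F),0;0,1] = (A : Matrix (Fin 2) (Fin 2) F)
    rw [Matrix.mul_assoc, Matrix.mul_fin_two]
    simp [inv_mul_cancel₀ hd, ← Matrix.one_fin_two]

lemma cardSL : Nat.card (Matrix.SpecialLinearGroup (Fin 2) F)
    = Fintype.card F * (Fintype.card F ^ 2 - 1) := by
  have h := Matrix.card_GL_field (𝔽 := F) (n := 2)
  rw [← Nat.card_congr (glEquiv (F := F)), Nat.card_prod, Nat.card_eq_fintype_card (α := Fˣ),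
    Fintype.card_units] at h
  set q := Fintype.card F with hq
  have hq1 : 1 < q := Fintype.one_lt_card
  have hprod : ∏ i : Fin 2, (q ^ 2 - q ^ (i : ℕ)) = (q ^ 2 - 1) * (q ^ 2 - q) := by
    simp [Fin.prod_univ_two]
  rw [hprod] at h
  have key : (q ^ 2 - 1) * (q ^ 2 - q) = (q * (q ^ 2 - 1)) * (q - 1) := by
    have : q ^ 2 - q = q * (q - 1) := by
      rw [Nat.mul_sub, pow_two, mul_one]
    rw [this]; ring
  rw [key] at h
  exact Nat.eq_of_mul_eq_mul_right (by omega) h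

lemma comm_iff (c : F) (hc : c ≠ 0) (g : Matrix.SpecialLinearGroup (Fin 2) F) :
    g * T c = T c * g ↔ g.1 0 1 = 0 ∧ g.1 1 1 = g.1 0 0 := by
  have hg : g.1 = !![g.1 0 0, g.1 0 1; g.1 1 0, g.1 1 1] := Matrix.etaExpand_eq g.1 |>.symm
  constructor
  · intro h
    have h' : g.1 * !![-1,0;c,-1] = !![-1,0;c,-1] * g.1 := congrArg Subtype.val h
    rw [hg, Matrix.mul_fin_two, Matrix.mul_fin_two] at h'
    have h00 := congrFun (congrFun h' 0) 0
    have h11 := congrFun (congrFun h' 1) 1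
    have h10 := congrFun (congrFun h' 1) 0
    simp at h00 h11 h10
    have hb : g.1 0 1 = 0 := h00.resolve_right hc
    refine ⟨hb, ?_⟩
    exact mul_left_cancel₀ hc (by linear_combination h10 : c * g.1 1 1 = c * g.1 0 0)
  · rintro ⟨hb, hd⟩
    apply Subtype.ext
    show g.1 * !![-1,0;c,-1] = !![-1,0;c,-1] * g.1
    rw [hg, hb, hd, Matrix.mul_fin_two, Matrix.mul_fin_two]
    ring_nf

def Umat (a : F) (ha : a * a = 1) (x : F) : Matrix.SpecialLinearGroup (Fin 2) F :=
  ⟨!![a, 0; x, a], by simp [Matrix.det_fin_two_of, ha]⟩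

lemma mem_stab_iff (c : F) (g : ConjAct (Matrix.SpecialLinearGroup (Fin 2) F)) :
    g ∈ MulAction.stabilizer (ConjAct (Matrix.SpecialLinearGroup (Fin 2) F)) (T c)
      ↔ ConjAct.ofConjAct g * T c = T c * ConjAct.ofConjAct g := by
  rw [MulAction.mem_stabilizer_iff, ConjAct.smul_def]
  constructor
  · intro h
    calc ConjAct.ofConjAct g * T c
        = (ConjAct.ofConjAct g * T c * (ConjAct.ofConjAct g)⁻¹) * ConjAct.ofConjAct g := by
          group
      _ = T c * ConjAct.ofConjAct g := by rw [h]
  · intro h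
    rw [h]
    group

noncomputable def stabEquiv (c : F) (hc : c ≠ 0) :
    MulAction.stabilizer (ConjAct (Matrix.SpecialLinearGroup (Fin 2) F)) (T c)
      ≃ {a : F // a * a = 1} × F where
  toFun s :=
    (⟨(ConjAct.ofConjAct s.1).1 0 0, by
      obtain ⟨hb, hd⟩ := (comm_iff c hc _).mp ((mem_stab_iff c s.1).mp s.2)
      have hdet := (ConjAct.ofConjAct s.1).2
      rw [Matrix.det_fin_two] at hdet
      rw [hb, hd] at hdet
      linear_combination hdet⟩,
     (ConjAct.ofConjAct s.1).1 1 0)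
  invFun p := ⟨ConjAct.toConjAct (Umat p.1.1 p.1.2 p.2), by
    rw [mem_stab_iff]
    rw [ConjAct.ofConjAct_toConjAct]
    rw [comm_iff c hc]
    constructor <;> simp [Umat]⟩
  left_inv s := by
    obtain ⟨hb, hd⟩ := (comm_iff c hc _).mp ((mem_stab_iff c s.1).mp s.2)
    apply Subtype.ext
    apply ConjAct.ofConjAct.injective
    rw [ConjAct.ofConjAct_toConjAct]
    apply Subtype.ext
    have hg' : (ConjAct.ofConjAct s.1).1
        = !![(ConjAct.ofConjAct s.1).1 0 0, (ConjAct.ofConjAct s.1).1 0 1;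
             (ConjAct.ofConjAct s.1).1 1 0, (ConjAct.ofConjAct s.1).1 1 1] :=
      (Matrix.etaExpand_eq _).symm
    rw [hb, hd] at hg'
    exact hg'.symm
  right_inv p := by
    apply Prod.ext
    · apply Subtype.ext
      simp [Umat]; rfl
    · simp [Umat]; rfl

lemma cardSq (hodd : Odd (Fintype.card F)) : Nat.card {a : F // a * a = 1} = 2 := by
  have hchar : ringChar F ≠ 2 := by
    intro h
    have := FiniteField.even_card_iff_char_two.mp h
    have := Nat.odd_iff.mp hodd
    omega
  have h1 : (1 : F) ≠ -1 := fun h => Ring.neg_one_ne_one_of_char_ne_two hchar h.symm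
  have he : {a : F | a * a = 1} = {1, -1} := by
    ext a
    simp [mul_self_eq_one_iff]
  calc Nat.card {a : F // a * a = 1} = ({a : F | a * a = 1}).ncard :=
        Nat.card_coe_set_eq _
    _ = 2 := by rw [he]; exact Set.ncard_pair h1

lemma conj_card (hodd : Odd (Fintype.card F)) (c : F) (hc : c ≠ 0) :
    {X : Matrix.SpecialLinearGroup (Fin 2) F | IsConj (T c) X}.ncard
      = (Fintype.card F ^ 2 - 1) / 2 := by
  classical
  set q := Fintype.card F with hq
  have hq1 : 1 < q := Fintype.one_lt_card
  have hset : {X : Matrix.SpecialLinearGroup (Fin 2) F | IsConj (T c) X}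
      = MulAction.orbit (ConjAct (Matrix.SpecialLinearGroup (Fin 2) F)) (T c) := by
    ext X
    rw [Set.mem_setOf_eq, ConjAct.mem_orbit_conjAct, isConj_comm]
  have horb := MulAction.card_orbit_mul_card_stabilizer_eq_card_group
    (ConjAct (Matrix.SpecialLinearGroup (Fin 2) F)) (T c)
  have hstab : Nat.card (MulAction.stabilizer
      (ConjAct (Matrix.SpecialLinearGroup (Fin 2) F)) (T c)) = 2 * q := by
    rw [Nat.card_congr (stabEquiv c hc), Nat.card_prod, cardSq hodd,
      Nat.card_eq_fintype_card]
  have hG : Nat.card (Matrix.SpecialLinearGroup (Fin 2) F) = q * (q ^ 2 - 1) := cardSL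
  rw [← Nat.card_eq_fintype_card, ← Nat.card_eq_fintype_card, ← Nat.card_eq_fintype_card,
    hstab] at horb
  have hCG : Nat.card (ConjAct (Matrix.SpecialLinearGroup (Fin 2) F))
      = Nat.card (Matrix.SpecialLinearGroup (Fin 2) F) := rfl
  rw [hCG, hG] at horb
  have heven : 2 ∣ q ^ 2 - 1 := by
    have := Nat.odd_iff.mp hodd
    have : q ^ 2 % 2 = 1 := by
      rw [pow_two, Nat.mul_mod, this]
    omega
  have harith : q * (q ^ 2 - 1) = (q ^ 2 - 1) / 2 * (2 * q) := by
    rw [← Nat.mul_assoc, Nat.mul_comm ((q ^ 2 - 1) / 2) 2, Nat.mul_div_cancel' heven,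
      Nat.mul_comm]
  rw [harith] at horb
  have := Nat.eq_of_mul_eq_mul_right (by positivity : 0 < 2 * q) horb
  rw [hset, ← Nat.card_coe_set_eq]
  exact this

end Aux

/-- Over a finite field of odd order `q` with `ν` a generator of `Fˣ`, the
conjugacy class in `SL₂(F)` of `[[-1,0],[-1,-1]]` has exactly `(q²-1)/2`
elements, and similarly for `[[-1,0],[-ν,-1]]`. -/
theorem card_conj_classes {F : Type} [Field F] [Fintype F]
    (hodd : Odd (Fintype.card F))
    (ν : Fˣ) (hν : ∀ x : Fˣ, x ∈ Subgroup.zpowers ν) :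
    {X : Matrix.SpecialLinearGroup (Fin 2) F | IsConj (T (-1 : F)) X}.ncard
      = (Fintype.card F ^ 2 - 1) / 2 ∧
    {X : Matrix.SpecialLinearGroup (Fin 2) F | IsConj (T (-(ν : F))) X}.ncard
      = (Fintype.card F ^ 2 - 1) / 2 := by
  classical
  exact ⟨conj_card hodd (-1) (by simp), conj_card hodd (-(ν : F)) (by simp)⟩
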